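/- For two massless four-vectors p_i, p_j along the +x axis (p_x > 0) with small rapidities, the pT-weighted angular separation ΔR_{ij}(p_{T,i} + p_{T,j}) is invariant to leading order under a simultaneous x–t boost with rapidity w: writing primes for boosted quantities, ΔR'_{ij}(p'_{T,i} + p'_{T,j}) = ΔR_{ij}(p_{T,i} + p_{T,j}) + o(max_k(|y_{y,k}| + |y_{z,k}|)) as all rapidities y_{y,k}, y_{z,k} → 0. -/

import Mathlib

open Filter Asymptotics

/-- The real inverse hyperbolic tangent. -/
noncomputable def artanh (x : ℝ) : ℝ := (1 / 2) * Real.log ((1 + x) / (1 - x))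

/-- The x-component of a massless four-vector with energy `E` and rapidities
`y_y`, `y_z` (so that `p_y = E tanh y_y`, `p_z = E tanh y_z`). -/
noncomputable def pxOf (E yy yz : ℝ) : ℝ :=
  E * Real.sqrt (1 - Real.tanh yy ^ 2 - Real.tanh yz ^ 2)

/-- The observables `(η, φ, p_T)` of a massless particle with energy `E` and
rapidities `(y_y, y_z)` after an x–t boost with rapidity `w` (take `w = 0`
for the unboosted particle). -/
noncomputable def obsP (w E yy yz : ℝ) : ℝ × ℝ × ℝ :=
  let px := pxOf E yy yz
  let py := E * Real.tanh yy
  let pz := E * Real.tanh yz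
  let E' := E * Real.cosh w + px * Real.sinh w
  let px' := E * Real.sinh w + px * Real.cosh w
  (artanh (pz / E'), Real.arctan (py / px'), Real.sqrt (px' ^ 2 + py ^ 2))

/-- The pT-weighted angular separation `ΔR_{ij} (p_{T,i} + p_{T,j})` of two
massless particles, after a simultaneous x–t boost with rapidity `w`. -/
noncomputable def weightedDR (w E1 yy1 yz1 E2 yy2 yz2 : ℝ) : ℝ :=
  let o1 := obsP w E1 yy1 yz1
  let o2 := obsP w E2 yy2 yz2
  Real.sqrt ((o1.1 - o2.1) ^ 2 + (o1.2.1 - o2.2.1) ^ 2) * (o1.2.2 + o2.2.2)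

lemma artanh_zero : artanh 0 = 0 := by simp [artanh]

lemma hasDerivAt_artanh_zero : HasDerivAt artanh 1 0 := by
  have hu : HasDerivAt (fun x : ℝ => (1 + x) / (1 - x)) 2 0 := by
    have h := ((hasDerivAt_id (0:ℝ)).const_add 1).div ((hasDerivAt_id (0:ℝ)).const_sub 1)
      (by norm_num)
    norm_num at h
    exact h
  have hl : HasDerivAt Real.log 1 ((1 + (0:ℝ)) / (1 - 0)) := by
    simpa using Real.hasDerivAt_log (by norm_num : ((1:ℝ)+0)/(1-0) ≠ 0)
  have h2 := (hl.comp 0 hu).const_mul (1/2 : ℝ)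
  have h3 : (1:ℝ) = 1/2 * (1 * 2) := by norm_num
  rw [h3]
  show HasDerivAt (fun x : ℝ => (1 / 2) * Real.log ((1 + x) / (1 - x))) _ 0
  simpa [Function.comp] using h2

lemma hasDerivAt_tanh_zero : HasDerivAt Real.tanh 1 0 := by
  have h := (Real.hasDerivAt_sinh 0).div (Real.hasDerivAt_cosh 0) (Real.cosh_pos 0).ne'
  norm_num at h
  have : Real.tanh = fun x => Real.sinh x / Real.cosh x := funext fun x => Real.tanh_eq_sinh_div_cosh x
  rw [this]; exact h

lemma hasFDerivAt_tanh_fst : HasFDerivAt (fun y : ℝ × ℝ => Real.tanh y.1)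
    (ContinuousLinearMap.fst ℝ ℝ ℝ) 0 := by
  have h0 : HasDerivAt Real.tanh 1 ((0:ℝ×ℝ).1) := by simpa using hasDerivAt_tanh_zero
  have hf : HasFDerivAt (Prod.fst : ℝ × ℝ → ℝ) (ContinuousLinearMap.fst ℝ ℝ ℝ) 0 := hasFDerivAt_fst
  simpa [Function.comp_def] using h0.comp_hasFDerivAt (0 : ℝ × ℝ) hf

lemma hasFDerivAt_tanh_snd : HasFDerivAt (fun y : ℝ × ℝ => Real.tanh y.2)
    (ContinuousLinearMap.snd ℝ ℝ ℝ) 0 := by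
  have h0 : HasDerivAt Real.tanh 1 ((0:ℝ×ℝ).2) := by simpa using hasDerivAt_tanh_zero
  have hf : HasFDerivAt (Prod.snd : ℝ × ℝ → ℝ) (ContinuousLinearMap.snd ℝ ℝ ℝ) 0 := hasFDerivAt_snd
  simpa [Function.comp_def] using h0.comp_hasFDerivAt (0 : ℝ × ℝ) hf

lemma hasFDerivAt_inner_pxOf : HasFDerivAt (fun y : ℝ × ℝ => 1 - Real.tanh y.1 ^ 2 - Real.tanh y.2 ^ 2)
    (0 : ℝ × ℝ →L[ℝ] ℝ) 0 := by
  have h := ((hasFDerivAt_const (1:ℝ) (0:ℝ×ℝ)).sub (hasFDerivAt_tanh_fst.mul hasFDerivAt_tanh_fst)).sub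
    (hasFDerivAt_tanh_snd.mul hasFDerivAt_tanh_snd)
  have h2 : HasFDerivAt (fun y : ℝ × ℝ => 1 - Real.tanh y.1 * Real.tanh y.1 - Real.tanh y.2 * Real.tanh y.2)
      (0 : ℝ × ℝ →L[ℝ] ℝ) 0 := by
    refine h.congr_fderiv ?_
    ext y <;> simp
  simpa [pow_two] using h2

lemma hasFDerivAt_pxOf (E : ℝ) :
    HasFDerivAt (fun y : ℝ × ℝ => pxOf E y.1 y.2) (0 : ℝ × ℝ →L[ℝ] ℝ) 0 := by
  have hs := hasFDerivAt_inner_pxOf.sqrt (by norm_num)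
  have h := hs.const_mul E
  show HasFDerivAt (fun y : ℝ × ℝ => E * Real.sqrt (1 - Real.tanh y.1 ^ 2 - Real.tanh y.2 ^ 2)) _ 0
  refine h.congr_fderiv ?_
  simp

lemma pxOf_zero (E : ℝ) : pxOf E 0 0 = E := by simp [pxOf]

section particle
variable (w E : ℝ)

lemma hasFDerivAt_Eden :
    HasFDerivAt (fun y : ℝ × ℝ => E * Real.cosh w + pxOf E y.1 y.2 * Real.sinh w)
      (0 : ℝ × ℝ →L[ℝ] ℝ) 0 := by
  have h := ((hasFDerivAt_pxOf E).mul_const (Real.sinh w)).const_add (E * Real.cosh w)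
  refine h.congr_fderiv ?_
  simp

lemma hasFDerivAt_Pden :
    HasFDerivAt (fun y : ℝ × ℝ => E * Real.sinh w + pxOf E y.1 y.2 * Real.cosh w)
      (0 : ℝ × ℝ →L[ℝ] ℝ) 0 := by
  have h := ((hasFDerivAt_pxOf E).mul_const (Real.cosh w)).const_add (E * Real.sinh w)
  refine h.congr_fderiv ?_
  simp

lemma Eden_zero : E * Real.cosh w + pxOf E 0 0 * Real.sinh w = E * Real.exp w := by
  rw [pxOf_zero, ← mul_add, Real.cosh_add_sinh]

lemma Pden_zero : E * Real.sinh w + pxOf E 0 0 * Real.cosh w = E * Real.exp w := by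
  rw [pxOf_zero, ← mul_add, Real.sinh_add_cosh]

variable (hE : 0 < E)

lemma hasFDerivAt_div_simple {c d : ℝ × ℝ → ℝ} {c' : ℝ × ℝ →L[ℝ] ℝ}
    (hc : HasFDerivAt c c' 0) (hd : HasFDerivAt d (0 : ℝ × ℝ →L[ℝ] ℝ) 0)
    (h0 : c 0 = 0) (hne : d 0 ≠ 0) :
    HasFDerivAt (fun y => c y / d y) ((d 0)⁻¹ • c') 0 := by
  have hinv : HasFDerivAt (fun y => (d y)⁻¹) (0 : ℝ × ℝ →L[ℝ] ℝ) 0 := by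
    have h := (hasDerivAt_inv hne).comp_hasFDerivAt (0 : ℝ × ℝ) hd
    simpa [Function.comp_def] using h
  have h := hc.mul hinv
  have heq : (fun y => c y / d y) = fun y => c y * (d y)⁻¹ := by
    funext y; rw [div_eq_mul_inv]
  rw [heq]
  refine h.congr_fderiv ?_
  refine ContinuousLinearMap.ext fun v => ?_
  simp [h0]

include hE

lemma Eexp_pos : 0 < E * Real.exp w := mul_pos hE (Real.exp_pos w)

lemma hasFDerivAt_ratio_z :
    HasFDerivAt (fun y : ℝ × ℝ => (E * Real.tanh y.2) / (E * Real.cosh w + pxOf E y.1 y.2 * Real.sinh w))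
      (Real.exp (-w) • ContinuousLinearMap.snd ℝ ℝ ℝ) 0 := by
  have hnum : HasFDerivAt (fun y : ℝ × ℝ => E * Real.tanh y.2)
      (E • ContinuousLinearMap.snd ℝ ℝ ℝ) 0 := hasFDerivAt_tanh_snd.const_mul E
  have hden := hasFDerivAt_Eden w E
  have hne : E * Real.cosh w + pxOf E (0:ℝ×ℝ).1 (0:ℝ×ℝ).2 * Real.sinh w ≠ 0 := by
    simpa using (Eden_zero w E ▸ (Eexp_pos w E hE).ne')
  have h := hasFDerivAt_div_simple hnum hden (by simp) hne
  convert h using 1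
  have h0 : E * Real.cosh w + pxOf E (0:ℝ×ℝ).1 (0:ℝ×ℝ).2 * Real.sinh w = E * Real.exp w := by
    simpa using Eden_zero w E
  refine ContinuousLinearMap.ext fun v => ?_
  simp [h0, Real.exp_neg, mul_inv]
  rw [pxOf_zero, ← mul_add, Real.cosh_add_sinh, mul_inv]
  have hEne : E ≠ 0 := hE.ne'
  field_simp

lemma hasFDerivAt_ratio_y :
    HasFDerivAt (fun y : ℝ × ℝ => (E * Real.tanh y.1) / (E * Real.sinh w + pxOf E y.1 y.2 * Real.cosh w))
      (Real.exp (-w) • ContinuousLinearMap.fst ℝ ℝ ℝ) 0 := by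
  have hnum : HasFDerivAt (fun y : ℝ × ℝ => E * Real.tanh y.1)
      (E • ContinuousLinearMap.fst ℝ ℝ ℝ) 0 := hasFDerivAt_tanh_fst.const_mul E
  have hden := hasFDerivAt_Pden w E
  have hne : E * Real.sinh w + pxOf E (0:ℝ×ℝ).1 (0:ℝ×ℝ).2 * Real.cosh w ≠ 0 := by
    simpa using (Pden_zero w E ▸ (Eexp_pos w E hE).ne')
  have h := hasFDerivAt_div_simple hnum hden (by simp) hne
  convert h using 1
  refine ContinuousLinearMap.ext fun v => ?_
  simp [Real.exp_neg, mul_inv]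
  rw [pxOf_zero, ← mul_add, Real.sinh_add_cosh, mul_inv]
  have hEne : E ≠ 0 := hE.ne'
  field_simp

lemma hasFDerivAt_eta :
    HasFDerivAt (fun y : ℝ × ℝ => (obsP w E y.1 y.2).1)
      (Real.exp (-w) • ContinuousLinearMap.snd ℝ ℝ ℝ) 0 := by
  have hr := hasFDerivAt_ratio_z w E hE
  have ha : HasDerivAt artanh 1
      ((fun y : ℝ × ℝ => (E * Real.tanh y.2) / (E * Real.cosh w + pxOf E y.1 y.2 * Real.sinh w)) 0) := by
    simpa using hasDerivAt_artanh_zero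
  have h := ha.comp_hasFDerivAt (0 : ℝ × ℝ) hr
  show HasFDerivAt (fun y : ℝ × ℝ =>
    artanh ((E * Real.tanh y.2) / (E * Real.cosh w + pxOf E y.1 y.2 * Real.sinh w))) _ 0
  simpa [Function.comp_def] using h

lemma hasFDerivAt_phi :
    HasFDerivAt (fun y : ℝ × ℝ => (obsP w E y.1 y.2).2.1)
      (Real.exp (-w) • ContinuousLinearMap.fst ℝ ℝ ℝ) 0 := by
  have hr := hasFDerivAt_ratio_y w E hE
  have ha : HasDerivAt Real.arctan 1
      ((fun y : ℝ × ℝ => (E * Real.tanh y.1) / (E * Real.sinh w + pxOf E y.1 y.2 * Real.cosh w)) 0) := by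
    have := Real.hasDerivAt_arctan 0
    norm_num at this
    simpa using this
  have h := ha.comp_hasFDerivAt (0 : ℝ × ℝ) hr
  show HasFDerivAt (fun y : ℝ × ℝ =>
    Real.arctan ((E * Real.tanh y.1) / (E * Real.sinh w + pxOf E y.1 y.2 * Real.cosh w))) _ 0
  simpa [Function.comp_def] using h

lemma hasFDerivAt_pT :
    HasFDerivAt (fun y : ℝ × ℝ => (obsP w E y.1 y.2).2.2)
      (0 : ℝ × ℝ →L[ℝ] ℝ) 0 := by
  have hpy : HasFDerivAt (fun y : ℝ × ℝ => E * Real.tanh y.1)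
      (E • ContinuousLinearMap.fst ℝ ℝ ℝ) 0 := hasFDerivAt_tanh_fst.const_mul E
  have hden := hasFDerivAt_Pden w E
  have hq : HasFDerivAt (fun y : ℝ × ℝ =>
      (E * Real.sinh w + pxOf E y.1 y.2 * Real.cosh w) ^ 2 + (E * Real.tanh y.1) ^ 2)
      (0 : ℝ × ℝ →L[ℝ] ℝ) 0 := by
    have h := (hden.mul hden).add (hpy.mul hpy)
    have h2 : HasFDerivAt (fun y : ℝ × ℝ =>
        (E * Real.sinh w + pxOf E y.1 y.2 * Real.cosh w) * (E * Real.sinh w + pxOf E y.1 y.2 * Real.cosh w)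
          + (E * Real.tanh y.1) * (E * Real.tanh y.1)) (0 : ℝ × ℝ →L[ℝ] ℝ) 0 := by
      refine h.congr_fderiv ?_
      refine ContinuousLinearMap.ext fun v => ?_
      simp
    simpa [pow_two] using h2
  have hne : ((fun y : ℝ × ℝ =>
      (E * Real.sinh w + pxOf E y.1 y.2 * Real.cosh w) ^ 2 + (E * Real.tanh y.1) ^ 2) 0) ≠ 0 := by
    have hp : E * Real.sinh w + pxOf E (0:ℝ×ℝ).1 (0:ℝ×ℝ).2 * Real.cosh w = E * Real.exp w := by
      simpa using Pden_zero w E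
    show (E * Real.sinh w + pxOf E (0:ℝ×ℝ).1 (0:ℝ×ℝ).2 * Real.cosh w) ^ 2
        + (E * Real.tanh (0:ℝ×ℝ).1) ^ 2 ≠ 0
    rw [hp]
    have h2 : (0:ℝ) < (E * Real.exp w) ^ 2 + (E * Real.tanh (0:ℝ×ℝ).1) ^ 2 := by
      have h1 : (0:ℝ) < (E * Real.exp w) ^ 2 := pow_pos (mul_pos hE (Real.exp_pos w)) 2
      nlinarith [sq_nonneg (E * Real.tanh (0:ℝ×ℝ).1)]
    exact h2.ne'
  have h := hq.sqrt hne
  show HasFDerivAt (fun y : ℝ × ℝ => Real.sqrt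
    ((E * Real.sinh w + pxOf E y.1 y.2 * Real.cosh w) ^ 2 + (E * Real.tanh y.1) ^ 2)) _ 0
  refine h.congr_fderiv ?_
  simp

lemma eta_littleO :
    (fun y : ℝ × ℝ => (obsP w E y.1 y.2).1 - Real.exp (-w) * y.2) =o[nhds 0]
      (fun y : ℝ × ℝ => ‖y‖) := by
  have h := (hasFDerivAt_eta w E hE).isLittleO
  have h2 := h.norm_right
  refine h2.congr (fun y => ?_) (fun y => by simp)
  have hf0 : (obsP w E 0 0).1 = 0 := by
    simp [obsP, artanh_zero]
  simp [hf0]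

lemma phi_littleO :
    (fun y : ℝ × ℝ => (obsP w E y.1 y.2).2.1 - Real.exp (-w) * y.1) =o[nhds 0]
      (fun y : ℝ × ℝ => ‖y‖) := by
  have h := (hasFDerivAt_phi w E hE).isLittleO
  have h2 := h.norm_right
  refine h2.congr (fun y => ?_) (fun y => by simp)
  have hf0 : (obsP w E 0 0).2.1 = 0 := by
    simp [obsP]
  simp [hf0]

lemma pT_littleO :
    (fun y : ℝ × ℝ => (obsP w E y.1 y.2).2.2 - E * Real.exp w) =o[nhds 0]
      (fun y : ℝ × ℝ => ‖y‖) := by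
  have h := (hasFDerivAt_pT w E hE).isLittleO
  have h2 := h.norm_right
  refine h2.congr (fun y => ?_) (fun y => by simp)
  have hf0 : (obsP w E 0 0).2.2 = E * Real.exp w := by
    simp [obsP, pxOf]
    rw [← mul_add, Real.sinh_add_cosh]
    exact Real.sqrt_sq (mul_pos hE (Real.exp_pos w)).le
  simp [hf0]

end particle

section twoparticle

lemma littleO_comp_fst {f : ℝ × ℝ → ℝ} (h : f =o[nhds 0] fun y : ℝ × ℝ => ‖y‖) :
    (fun v : (ℝ × ℝ) × (ℝ × ℝ) => f v.1) =o[nhds 0] fun v => ‖v‖ := by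
  have ht : Filter.Tendsto (Prod.fst : (ℝ × ℝ) × (ℝ × ℝ) → ℝ × ℝ) (nhds 0) (nhds 0) :=
    continuous_fst.tendsto' 0 0 rfl
  exact (h.comp_tendsto ht).trans_isBigO
    (isBigO_of_le _ fun v => by simpa using norm_fst_le v)

lemma littleO_comp_snd {f : ℝ × ℝ → ℝ} (h : f =o[nhds 0] fun y : ℝ × ℝ => ‖y‖) :
    (fun v : (ℝ × ℝ) × (ℝ × ℝ) => f v.2) =o[nhds 0] fun v => ‖v‖ := by
  have ht : Filter.Tendsto (Prod.snd : (ℝ × ℝ) × (ℝ × ℝ) → ℝ × ℝ) (nhds 0) (nhds 0) :=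
    continuous_snd.tendsto' 0 0 rfl
  exact (h.comp_tendsto ht).trans_isBigO
    (isBigO_of_le _ fun v => by simpa using norm_snd_le v)

lemma sqrt_sum_sq_eq_cabs (x y : ℝ) : Real.sqrt (x ^ 2 + y ^ 2) = ‖(⟨x, y⟩ : ℂ)‖ := by
  rw [Complex.norm_def, Complex.normSq_mk, sq, sq]

lemma sqrt_diff_le (a b r s : ℝ) :
    |Real.sqrt ((a + r) ^ 2 + (b + s) ^ 2) - Real.sqrt (a ^ 2 + b ^ 2)| ≤ |r| + |s| := by
  rw [sqrt_sum_sq_eq_cabs, sqrt_sum_sq_eq_cabs]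
  have h1 := abs_norm_sub_norm_le (⟨a + r, b + s⟩ : ℂ) (⟨a, b⟩ : ℂ)
  have h2 : (⟨a + r, b + s⟩ : ℂ) - ⟨a, b⟩ = ⟨r, s⟩ := by
    apply Complex.ext <;> simp
  rw [h2] at h1
  refine h1.trans ?_
  simpa using Complex.norm_le_abs_re_add_abs_im (⟨r, s⟩ : ℂ)

lemma sqrt_sum_sq_le (r s : ℝ) : Real.sqrt (r ^ 2 + s ^ 2) ≤ |r| + |s| := by
  rw [sqrt_sum_sq_eq_cabs]
  simpa using Complex.norm_le_abs_re_add_abs_im (⟨r, s⟩ : ℂ)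

variable (w E1 E2 : ℝ) (h1 : 0 < E1) (h2 : 0 < E2)
include h1 h2

lemma main_est :
    (fun v : (ℝ × ℝ) × (ℝ × ℝ) =>
        weightedDR w E1 v.1.1 v.1.2 E2 v.2.1 v.2.2 -
          (E1 + E2) * Real.sqrt ((v.1.2 - v.2.2) ^ 2 + (v.1.1 - v.2.1) ^ 2))
      =o[nhds 0] (fun v : (ℝ × ℝ) × (ℝ × ℝ) => ‖v‖) := by
  -- abbreviations
  set l : Filter ((ℝ × ℝ) × (ℝ × ℝ)) := nhds 0 with hl
  have hEta : (fun v : (ℝ × ℝ) × (ℝ × ℝ) =>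
      ((obsP w E1 v.1.1 v.1.2).1 - (obsP w E2 v.2.1 v.2.2).1)
        - Real.exp (-w) * (v.1.2 - v.2.2)) =o[l] (fun v => ‖v‖) := by
    have := (littleO_comp_fst (eta_littleO w E1 h1)).sub (littleO_comp_snd (eta_littleO w E2 h2))
    refine this.congr (fun v => ?_) (fun v => rfl)
    ring
  have hPhi : (fun v : (ℝ × ℝ) × (ℝ × ℝ) =>
      ((obsP w E1 v.1.1 v.1.2).2.1 - (obsP w E2 v.2.1 v.2.2).2.1)
        - Real.exp (-w) * (v.1.1 - v.2.1)) =o[l] (fun v => ‖v‖) := by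
    have := (littleO_comp_fst (phi_littleO w E1 h1)).sub (littleO_comp_snd (phi_littleO w E2 h2))
    refine this.congr (fun v => ?_) (fun v => rfl)
    ring
  have hPT : (fun v : (ℝ × ℝ) × (ℝ × ℝ) =>
      ((obsP w E1 v.1.1 v.1.2).2.2 + (obsP w E2 v.2.1 v.2.2).2.2)
        - (E1 + E2) * Real.exp w) =o[l] (fun v => ‖v‖) := by
    have := (littleO_comp_fst (pT_littleO w E1 h1)).add (littleO_comp_snd (pT_littleO w E2 h2))
    refine this.congr (fun v => ?_) (fun v => rfl)
    ring
  -- the D-part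
  have hD : (fun v : (ℝ × ℝ) × (ℝ × ℝ) =>
      Real.sqrt (((obsP w E1 v.1.1 v.1.2).1 - (obsP w E2 v.2.1 v.2.2).1) ^ 2
          + ((obsP w E1 v.1.1 v.1.2).2.1 - (obsP w E2 v.2.1 v.2.2).2.1) ^ 2)
        - Real.sqrt ((Real.exp (-w) * (v.1.2 - v.2.2)) ^ 2
          + (Real.exp (-w) * (v.1.1 - v.2.1)) ^ 2)) =o[l] (fun v => ‖v‖) := by
    refine IsBigO.trans_isLittleO (g := fun v =>
      |((obsP w E1 v.1.1 v.1.2).1 - (obsP w E2 v.2.1 v.2.2).1) - Real.exp (-w) * (v.1.2 - v.2.2)|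
      + |((obsP w E1 v.1.1 v.1.2).2.1 - (obsP w E2 v.2.1 v.2.2).2.1) - Real.exp (-w) * (v.1.1 - v.2.1)|)
      (isBigO_of_le _ fun v => ?_) ?_
    · set a := Real.exp (-w) * (v.1.2 - v.2.2)
      set b := Real.exp (-w) * (v.1.1 - v.2.1)
      set r := ((obsP w E1 v.1.1 v.1.2).1 - (obsP w E2 v.2.1 v.2.2).1) - a with hr
      set s := ((obsP w E1 v.1.1 v.1.2).2.1 - (obsP w E2 v.2.1 v.2.2).2.1) - b with hs
      have key := sqrt_diff_le a b r s
      have e1 : a + r = (obsP w E1 v.1.1 v.1.2).1 - (obsP w E2 v.2.1 v.2.2).1 := by rw [hr]; ring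
      have e2 : b + s = (obsP w E1 v.1.1 v.1.2).2.1 - (obsP w E2 v.2.1 v.2.2).2.1 := by rw [hs]; ring
      rw [e1, e2] at key
      calc ‖_‖ ≤ |r| + |s| := by
              simpa using key
        _ ≤ ‖|r| + |s|‖ := by
              rw [Real.norm_eq_abs]
              exact le_abs_self _
    · exact (hEta.abs_left.add hPhi.abs_left)
  -- PT tends to a constant, hence is O(1)
  have hnorm0 : Filter.Tendsto (fun v : (ℝ × ℝ) × (ℝ × ℝ) => ‖v‖) l (nhds 0) := by
    have := continuous_norm.tendsto (0 : (ℝ × ℝ) × (ℝ × ℝ))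
    simpa using this
  have hPTtend : Filter.Tendsto (fun v : (ℝ × ℝ) × (ℝ × ℝ) =>
      (obsP w E1 v.1.1 v.1.2).2.2 + (obsP w E2 v.2.1 v.2.2).2.2) l
      (nhds ((E1 + E2) * Real.exp w)) := by
    have ht := hPT.isBigO.trans_tendsto hnorm0
    have h3 := ht.add_const ((E1 + E2) * Real.exp w)
    simpa using h3
  have hPTO : (fun v : (ℝ × ℝ) × (ℝ × ℝ) =>
      (obsP w E1 v.1.1 v.1.2).2.2 + (obsP w E2 v.2.1 v.2.2).2.2) =O[l]
      (fun _ => (1 : ℝ)) := hPTtend.isBigO_one ℝ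
  -- the linear sqrt part is O(‖v‖)
  have hABO : (fun v : (ℝ × ℝ) × (ℝ × ℝ) => Real.sqrt ((Real.exp (-w) * (v.1.2 - v.2.2)) ^ 2
      + (Real.exp (-w) * (v.1.1 - v.2.1)) ^ 2)) =O[l] (fun v => ‖v‖) := by
    refine IsBigO.of_bound (Real.exp (-w) * 4) (Filter.Eventually.of_forall fun v => ?_)
    have hb := sqrt_sum_sq_le (Real.exp (-w) * (v.1.2 - v.2.2)) (Real.exp (-w) * (v.1.1 - v.2.1))
    have e0 : (0 : ℝ) ≤ Real.exp (-w) := (Real.exp_pos _).le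
    have k1 : |v.1.2 - v.2.2| ≤ 2 * ‖v‖ := by
      have a1 : |v.1.2| ≤ ‖v‖ := le_trans (norm_snd_le v.1) (norm_fst_le v)
      have a2 : |v.2.2| ≤ ‖v‖ := le_trans (norm_snd_le v.2) (norm_snd_le v)
      calc |v.1.2 - v.2.2| ≤ |v.1.2| + |v.2.2| := abs_sub _ _
        _ ≤ 2 * ‖v‖ := by linarith
    have k2 : |v.1.1 - v.2.1| ≤ 2 * ‖v‖ := by
      have a1 : |v.1.1| ≤ ‖v‖ := le_trans (norm_fst_le v.1) (norm_fst_le v)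
      have a2 : |v.2.1| ≤ ‖v‖ := le_trans (norm_fst_le v.2) (norm_snd_le v)
      calc |v.1.1 - v.2.1| ≤ |v.1.1| + |v.2.1| := abs_sub _ _
        _ ≤ 2 * ‖v‖ := by linarith
    rw [Real.norm_eq_abs, abs_of_nonneg (Real.sqrt_nonneg _)]
    refine hb.trans ?_
    rw [abs_mul, abs_mul, abs_of_nonneg e0, norm_norm]
    nlinarith [norm_nonneg v]
  -- ‖v‖ * ‖v‖ = O(‖v‖) near 0
  have hsq : (fun v : (ℝ × ℝ) × (ℝ × ℝ) => ‖v‖ * ‖v‖) =O[l] (fun v => ‖v‖) := by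
    refine IsBigO.of_bound 1 ?_
    have hball : ∀ᶠ v : (ℝ × ℝ) × (ℝ × ℝ) in l, ‖v‖ < 1 := by
      have hm := Metric.ball_mem_nhds (0 : (ℝ × ℝ) × (ℝ × ℝ)) one_pos
      refine Filter.eventually_of_mem hm fun v hv => ?_
      simpa [mem_ball_zero_iff] using hv
    filter_upwards [hball] with v hv
    have h0 : (0:ℝ) ≤ ‖v‖ := norm_nonneg v
    rw [Real.norm_eq_abs, abs_of_nonneg (mul_nonneg h0 h0), norm_norm]
    nlinarith
  -- combine
  have term1 : (fun v : (ℝ × ℝ) × (ℝ × ℝ) =>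
      (Real.sqrt (((obsP w E1 v.1.1 v.1.2).1 - (obsP w E2 v.2.1 v.2.2).1) ^ 2
          + ((obsP w E1 v.1.1 v.1.2).2.1 - (obsP w E2 v.2.1 v.2.2).2.1) ^ 2)
        - Real.sqrt ((Real.exp (-w) * (v.1.2 - v.2.2)) ^ 2
          + (Real.exp (-w) * (v.1.1 - v.2.1)) ^ 2))
      * ((obsP w E1 v.1.1 v.1.2).2.2 + (obsP w E2 v.2.1 v.2.2).2.2)) =o[l]
      (fun v => ‖v‖) := by
    have h := hD.mul_isBigO hPTO
    refine h.congr (fun v => rfl) (fun v => by simp)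
  have term2 : (fun v : (ℝ × ℝ) × (ℝ × ℝ) =>
      Real.sqrt ((Real.exp (-w) * (v.1.2 - v.2.2)) ^ 2
          + (Real.exp (-w) * (v.1.1 - v.2.1)) ^ 2)
      * (((obsP w E1 v.1.1 v.1.2).2.2 + (obsP w E2 v.2.1 v.2.2).2.2)
          - (E1 + E2) * Real.exp w)) =o[l] (fun v => ‖v‖) :=
    (hABO.mul_isLittleO hPT).trans_isBigO hsq
  have hsum := term1.add term2
  refine hsum.congr (fun v => ?_) (fun v => rfl)
  have hid : Real.sqrt ((Real.exp (-w) * (v.1.2 - v.2.2)) ^ 2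
        + (Real.exp (-w) * (v.1.1 - v.2.1)) ^ 2)
      = Real.exp (-w) * Real.sqrt ((v.1.2 - v.2.2) ^ 2 + (v.1.1 - v.2.1) ^ 2) := by
    rw [show (Real.exp (-w) * (v.1.2 - v.2.2)) ^ 2 + (Real.exp (-w) * (v.1.1 - v.2.1)) ^ 2
        = (Real.exp (-w)) ^ 2 * ((v.1.2 - v.2.2) ^ 2 + (v.1.1 - v.2.1) ^ 2) from by ring,
      Real.sqrt_mul (sq_nonneg _), Real.sqrt_sq (Real.exp_pos _).le]
  have hexp : Real.exp (-w) * Real.exp w = 1 := by rw [← Real.exp_add]; simp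
  show _ = weightedDR w E1 v.1.1 v.1.2 E2 v.2.1 v.2.2
      - (E1 + E2) * Real.sqrt ((v.1.2 - v.2.2) ^ 2 + (v.1.1 - v.2.1) ^ 2)
  rw [hid]
  show _ = Real.sqrt (((obsP w E1 v.1.1 v.1.2).1 - (obsP w E2 v.2.1 v.2.2).1) ^ 2
      + ((obsP w E1 v.1.1 v.1.2).2.1 - (obsP w E2 v.2.1 v.2.2).2.1) ^ 2)
      * ((obsP w E1 v.1.1 v.1.2).2.2 + (obsP w E2 v.2.1 v.2.2).2.2)
      - (E1 + E2) * Real.sqrt ((v.1.2 - v.2.2) ^ 2 + (v.1.1 - v.2.1) ^ 2)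
  linear_combination (-(E1 + E2) * Real.sqrt ((v.1.2 - v.2.2) ^ 2 + (v.1.1 - v.2.1) ^ 2)) * hexp

end twoparticle

/-- `ΔR'_{ij}(p'_{T,i} + p'_{T,j}) = ΔR_{ij}(p_{T,i} + p_{T,j}) +
o(max_k(|y_{y,k}| + |y_{z,k}|))` as all rapidities tend to `0`, for a
simultaneous x–t boost with rapidity `w` of both massless particles. -/
theorem weightedDR_boostXT_invariant_leading_order (w E1 E2 : ℝ)
    (h1 : 0 < E1) (h2 : 0 < E2) :
    (fun v : (ℝ × ℝ) × (ℝ × ℝ) =>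
        weightedDR w E1 v.1.1 v.1.2 E2 v.2.1 v.2.2 -
          weightedDR 0 E1 v.1.1 v.1.2 E2 v.2.1 v.2.2)
      =o[nhds 0]
    (fun v : (ℝ × ℝ) × (ℝ × ℝ) =>
        max (|v.1.1| + |v.1.2|) (|v.2.1| + |v.2.2|)) := by
  have hw := main_est w E1 E2 h1 h2
  have h0 := main_est 0 E1 E2 h1 h2
  have hmain : (fun v : (ℝ × ℝ) × (ℝ × ℝ) =>
      weightedDR w E1 v.1.1 v.1.2 E2 v.2.1 v.2.2 -
        weightedDR 0 E1 v.1.1 v.1.2 E2 v.2.1 v.2.2) =o[nhds 0]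
      (fun v : (ℝ × ℝ) × (ℝ × ℝ) => ‖v‖) :=
    (hw.sub h0).congr (fun v => by ring) (fun v => rfl)
  refine hmain.trans_isBigO (isBigO_of_le _ fun v => ?_)
  rw [norm_norm, Real.norm_eq_abs]
  have hnn : (0:ℝ) ≤ max (|v.1.1| + |v.1.2|) (|v.2.1| + |v.2.2|) :=
    le_max_of_le_left (by positivity)
  rw [abs_of_nonneg hnn]
  have hv1 : ‖v.1‖ ≤ |v.1.1| + |v.1.2| := by
    rw [Prod.norm_def]
    apply max_le
    · rw [Real.norm_eq_abs]; nlinarith [abs_nonneg v.1.2]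
    · rw [Real.norm_eq_abs]; nlinarith [abs_nonneg v.1.1]
  have hv2 : ‖v.2‖ ≤ |v.2.1| + |v.2.2| := by
    rw [Prod.norm_def]
    apply max_le
    · rw [Real.norm_eq_abs]; nlinarith [abs_nonneg v.2.2]
    · rw [Real.norm_eq_abs]; nlinarith [abs_nonneg v.2.1]
  calc ‖v‖ = max ‖v.1‖ ‖v.2‖ := Prod.norm_def v
    _ ≤ _ := max_le_max hv1 hv2
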